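/- In ℂ³ with standard orthonormal basis e₀, e₁, e₂, let ω₀, ω₁ ∈ ℂ with |ω₀|² + |ω₁|² = 1, let b := conj(ω₀)·e₀ + conj(ω₁)·e₁ and d := −ω₁·e₀ + ω₀·e₁, let Ω : ℝ → ℝ be continuous, Φ(t) := ∫₀^t Ω(s) ds, and H(t) := Ω(t)·(|e₂⟩⟨b| + |b⟩⟨e₂|). Define W(t) := |d⟩⟨d| + cos Φ(t)·(|b⟩⟨b| + |e₂⟩⟨e₂|) − i·sin Φ(t)·(|e₂⟩⟨b| + |b⟩⟨e₂|). Then W(0) = 1, W(t) is unitary for every t, and W is differentiable with i·W′(t) = H(t) ∘ W(t) for all t. -/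

import Mathlib

set_option maxHeartbeats 1000000
set_option synthInstance.maxHeartbeats 400000

/-- The rank-one operator `|u⟩⟨v| : x ↦ ⟨v, x⟩·u`. -/
noncomputable def ketbra {E : Type*} [NormedAddCommGroup E] [InnerProductSpace ℂ E]
    (u v : E) : E →L[ℂ] E :=
  (innerSL ℂ v).smulRight u

open scoped InnerProductSpace in
lemma ketbra_apply {E : Type*} [NormedAddCommGroup E] [InnerProductSpace ℂ E]
    (u v x : E) : ketbra u v x = ⟪v, x⟫_ℂ • u := rfl

open scoped InnerProductSpace in
lemma ketbra_comp {E : Type*} [NormedAddCommGroup E] [InnerProductSpace ℂ E]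
    (u v u' v' : E) : ketbra u v ∘L ketbra u' v' = ⟪v, u'⟫_ℂ • ketbra u v' := by
  ext x
  simp only [ContinuousLinearMap.comp_apply, ketbra_apply, ContinuousLinearMap.smul_apply,
    inner_smul_right, smul_smul]
  ring_nf

open scoped InnerProductSpace in
lemma adjoint_ketbra {E : Type*} [NormedAddCommGroup E] [InnerProductSpace ℂ E]
    [CompleteSpace E] (u v : E) :
    ContinuousLinearMap.adjoint (ketbra u v) = ketbra v u := by
  rw [eq_comm, ContinuousLinearMap.eq_adjoint_iff]
  intro x y
  simp only [ketbra_apply, inner_smul_left, inner_smul_right, ← inner_conj_symm u x,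
    RingHom.id_apply, starRingEnd_self_apply]
  ring

open scoped InnerProductSpace

open ContinuousLinearMap intervalIntegral in
/-- The explicit evolution operator `W(t)` of the three-level system with Hamiltonian
`H(t) = Ω(t)(|e₂⟩⟨b| + |b⟩⟨e₂|)` satisfies `W(0) = 1`, is unitary, and solves the operator
Schrödinger equation `i·W′(t) = H(t) ∘ W(t)`. -/
theorem three_level_evolution
    (ω₀ ω₁ : ℂ) (hω : ‖ω₀‖ ^ 2 + ‖ω₁‖ ^ 2 = 1)
    (e : Fin 3 → EuclideanSpace ℂ (Fin 3)) (he : ∀ i, e i = EuclideanSpace.single i 1)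
    (b d : EuclideanSpace ℂ (Fin 3))
    (hb : b = (starRingEnd ℂ) ω₀ • e 0 + (starRingEnd ℂ) ω₁ • e 1)
    (hd : d = -ω₁ • e 0 + ω₀ • e 1)
    (Ω : ℝ → ℝ) (hΩ : Continuous Ω)
    (Φ : ℝ → ℝ) (hΦ : ∀ t, Φ t = ∫ s in (0:ℝ)..t, Ω s)
    (Ham : ℝ → EuclideanSpace ℂ (Fin 3) →L[ℂ] EuclideanSpace ℂ (Fin 3))
    (hHam : ∀ t, Ham t = (Ω t : ℂ) • (ketbra (e 2) b + ketbra b (e 2)))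
    (W : ℝ → EuclideanSpace ℂ (Fin 3) →L[ℂ] EuclideanSpace ℂ (Fin 3))
    (hW : ∀ t, W t = ketbra d d
      + (Real.cos (Φ t) : ℂ) • (ketbra b b + ketbra (e 2) (e 2))
      - (Complex.I * (Real.sin (Φ t) : ℂ)) • (ketbra (e 2) b + ketbra b (e 2))) :
    W 0 = 1 ∧
    (∀ t, adjoint (W t) ∘L W t = 1 ∧ W t ∘L adjoint (W t) = 1) ∧
    (∀ t, ∃ D, HasDerivAt W D t ∧ Complex.I • D = Ham t ∘L W t) := by
  have hc : ω₀ * (starRingEnd ℂ) ω₀ + ω₁ * (starRingEnd ℂ) ω₁ = 1 := by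
    rw [Complex.mul_conj, Complex.mul_conj, ← Complex.ofReal_add, ← Complex.sq_norm,
      ← Complex.sq_norm, hω, Complex.ofReal_one]
  have hbx : ∀ x : EuclideanSpace ℂ (Fin 3), ⟪b, x⟫_ℂ = ω₀ * x 0 + ω₁ * x 1 := by
    intro x
    simp [hb, he, inner_add_left, inner_smul_left, EuclideanSpace.inner_single_left]; ring
  have hdx : ∀ x : EuclideanSpace ℂ (Fin 3),
      ⟪d, x⟫_ℂ = -((starRingEnd ℂ) ω₁ * x 0) + (starRingEnd ℂ) ω₀ * x 1 := by
    intro x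
    simp [hd, he, inner_add_left, inner_smul_left, EuclideanSpace.inner_single_left]; ring
  have hex : ∀ x : EuclideanSpace ℂ (Fin 3), ⟪e 2, x⟫_ℂ = x 2 := by
    intro x
    simp [he, EuclideanSpace.inner_single_left]
  have hbb : ⟪b, b⟫_ℂ = 1 := by
    rw [hbx, hb]; simp [he, EuclideanSpace.single_apply]; linear_combination hc
  have hdd : ⟪d, d⟫_ℂ = 1 := by
    rw [hdx, hd]; simp [he, EuclideanSpace.single_apply]; linear_combination hc
  have hbd : ⟪b, d⟫_ℂ = 0 := by
    rw [hbx, hd]; simp [he, EuclideanSpace.single_apply]; ring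
  have hdb : ⟪d, b⟫_ℂ = 0 := by
    rw [hdx, hb]; simp [he, EuclideanSpace.single_apply]; ring
  have hbe : ⟪b, e 2⟫_ℂ = 0 := by rw [hbx, he]; simp [EuclideanSpace.single_apply]
  have hde : ⟪d, e 2⟫_ℂ = 0 := by rw [hdx, he]; simp [EuclideanSpace.single_apply]
  have heb : ⟪e 2, b⟫_ℂ = 0 := by rw [hex, hb]; simp [he, EuclideanSpace.single_apply]
  have hed : ⟪e 2, d⟫_ℂ = 0 := by rw [hex, hd]; simp [he, EuclideanSpace.single_apply]
  have hee : ⟪e 2, e 2⟫_ℂ = 1 := by rw [hex, he]; simp [EuclideanSpace.single_apply]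
  have hcomp : ketbra d d + ketbra b b + ketbra (e 2) (e 2) = 1 := by
    refine ContinuousLinearMap.ext fun x => ?_
    simp only [ContinuousLinearMap.add_apply, ketbra_apply, ContinuousLinearMap.one_apply,
      hbx, hdx, hex]
    refine PiLp.ext fun i => ?_
    simp only [PiLp.add_apply, PiLp.smul_apply, hb, hd, he, PiLp.neg_apply, smul_eq_mul,
      EuclideanSpace.single_apply]
    fin_cases i <;> simp
    · linear_combination (x 0) * hc
    · linear_combination (x 1) * hc
  refine ⟨?_, ?_, ?_⟩
  · rw [hW 0, hΦ 0, intervalIntegral.integral_same]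
    simp only [Real.cos_zero, Real.sin_zero, Complex.ofReal_zero, Complex.ofReal_one,
      mul_zero, zero_smul, sub_zero, one_smul]
    rw [← hcomp]; abel
  · intro t
    have hcs : Complex.sin ((Φ t : ℝ) : ℂ) ^ 2 + Complex.cos ((Φ t : ℝ) : ℂ) ^ 2 = 1 :=
      Complex.sin_sq_add_cos_sq _
    have hadj : adjoint (W t) = ketbra d d
        + (Real.cos (Φ t) : ℂ) • (ketbra b b + ketbra (e 2) (e 2))
        + (Complex.I * (Real.sin (Φ t) : ℂ)) • (ketbra (e 2) b + ketbra b (e 2)) := by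
      rw [hW t]
      simp only [map_sub, map_add, map_smulₛₗ, adjoint_ketbra, Complex.conj_ofReal,
        map_mul, Complex.conj_I, starRingEnd_apply]
      simp only [Complex.star_def, Complex.conj_ofReal, Complex.conj_I, map_mul]
      module
    constructor <;>
    · rw [hadj, hW t]
      simp only [comp_add, add_comp, comp_sub, sub_comp, smul_comp, comp_smul, ketbra_comp,
        hbb, hdd, hbd, hdb, hbe, hde, heb, hed, hee, one_smul, zero_smul, smul_zero,
        smul_smul, smul_add, smul_sub, add_zero, zero_add, sub_zero, zero_comp, comp_zero]
      rw [← hcomp]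
      match_scalars
      all_goals try ring
      all_goals try linear_combination (Complex.sin ((Φ t:ℝ):ℂ))^2*Complex.I_sq - hcs
      all_goals try linear_combination hcs - (Complex.sin ((Φ t:ℝ):ℂ))^2*Complex.I_sq
      all_goals try linear_combination ((Complex.sin ((Φ t:ℝ):ℂ))^2+(Complex.cos ((Φ t:ℝ):ℂ))^2-2)*hcs + ((Complex.sin ((Φ t:ℝ):ℂ))^2*(3-2*(Complex.cos ((Φ t:ℝ):ℂ))^2) + (Complex.sin ((Φ t:ℝ):ℂ))^4*(Complex.I^2-1))*Complex.I_sq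
  · intro t
    have hΦd : HasDerivAt Φ (Ω t) t := by
      rw [funext hΦ]
      exact (hΩ.integral_hasStrictDerivAt 0 t).hasDerivAt
    have hcosd : HasDerivAt (fun u => ((Real.cos (Φ u) : ℂ)))
        ((-Real.sin (Φ t) * Ω t : ℝ) : ℂ) t :=
      (((Real.hasDerivAt_cos (Φ t)).comp t hΦd).ofReal_comp)
    have hsind : HasDerivAt (fun u => (Complex.I * (Real.sin (Φ u) : ℂ)))
        (Complex.I * ((Real.cos (Φ t) * Ω t : ℝ) : ℂ)) t :=
      (((Real.hasDerivAt_sin (Φ t)).comp t hΦd).ofReal_comp).const_mul Complex.I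
    refine ⟨((-Real.sin (Φ t) * Ω t : ℝ) : ℂ) • (ketbra b b + ketbra (e 2) (e 2))
        - (Complex.I * ((Real.cos (Φ t) * Ω t : ℝ) : ℂ)) • (ketbra (e 2) b + ketbra b (e 2)),
      ?_, ?_⟩
    · rw [funext hW]
      exact (((hcosd.smul_const _).const_add (ketbra d d)).sub (hsind.smul_const _))
    · rw [hHam, hW]
      simp only [comp_add, add_comp, comp_sub, sub_comp, smul_comp, comp_smul, ketbra_comp,
        hbb, hdd, hbd, hdb, hbe, hde, heb, hed, hee, one_smul, zero_smul, smul_zero,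
        smul_smul, smul_add, smul_sub, add_zero, zero_add, sub_zero, zero_comp, comp_zero]
      match_scalars
      all_goals try ring
      all_goals try linear_combination (Real.sin (Φ t):ℂ)*(Ω t:ℂ)*Complex.I_sq
      all_goals try linear_combination -(Real.sin (Φ t):ℂ)*(Ω t:ℂ)*Complex.I_sq
      all_goals try linear_combination -(Complex.cos ((Φ t:ℝ):ℂ))*((Ω t:ℝ):ℂ)*Complex.I_sq
      all_goals try linear_combination (Complex.cos ((Φ t:ℝ):ℂ))*((Ω t:ℝ):ℂ)*Complex.I_sq
      all_goals try linear_combination -(Complex.sin ((Φ t:ℝ):ℂ))*((Ω t:ℝ):ℂ)*Complex.I_sq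
      all_goals try linear_combination (Complex.sin ((Φ t:ℝ):ℂ))*((Ω t:ℝ):ℂ)*Complex.I_sq
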